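/- The comultiplication maps M' satisfy coassociativity: (M'_{i,j} ⊗ id_{W_k}) ∘ M'_{i+j,k} = (id_{W_i} ⊗ M'_{j,k}) ∘ M'_{i,j+k} as maps W_{i+j+k} → W_i ⊗ W_j ⊗ W_k. -/

import Mathlib

open Matrix
open scoped Kronecker

noncomputable section

/-- The quantum integer `[n] = (q^n - q^{-n})/(q - q⁻¹)`. -/
def qint {K : Type*} [Field K] (q : K) (n : ℤ) : K :=
  (q ^ n - q ^ (-n)) / (q - q⁻¹)

/-- The quantum factorial `[n]! = [n][n-1]⋯[1]`. -/
def qfact {K : Type*} [Field K] (q : K) : ℕ → K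
  | 0 => 1
  | n + 1 => qint q (n + 1) * qfact q n

/-- The quantum binomial coefficient `[n choose k] = [n]!/([k]![n-k]!)` (zero if `k > n`). -/
def qbinom {K : Type*} [Field K] (q : K) (n k : ℕ) : K :=
  if k ≤ n then qfact q n / (qfact q k * qfact q (n - k)) else 0

/-- The matrix of the multiplication map `M_{k,l} : W_k ⊗ W_l → W_{k+l}` in the
bases `(u, x)` (index `0 = u = v∧w^{i-1}`, `1 = x = w^i`):
`M(x_k⊗x_l) = x_{k+l}`, `M(u_k⊗x_l) = u_{k+l}`, `M(x_k⊗u_l) = (-q)^k u_{k+l}`,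
`M(u_k⊗u_l) = 0`. -/
def Mmat {K : Type*} [Field K] (q : K) (k : ℕ) : Matrix (Fin 2) (Fin 2 × Fin 2) K :=
  Matrix.single 0 (0, 1) 1 + Matrix.single 0 (1, 0) ((-q) ^ k) +
    Matrix.single 1 (1, 1) 1

/-- The matrix of the comultiplication map `M'_{k,l} : W_{k+l} → W_k ⊗ W_l`:
`M'(x_{k+l}) = [k+l choose k] x_k⊗x_l`,
`M'(u_{k+l}) = q^{-l}[k+l-1 choose l] u_k⊗x_l + (-1)^k [k+l-1 choose k] x_k⊗u_l`. -/
def M'mat {K : Type*} [Field K] (q : K) (k l : ℕ) : Matrix (Fin 2 × Fin 2) (Fin 2) K :=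
  Matrix.single (0, 1) 0 (q ^ (-(l : ℤ)) * qbinom q (k + l - 1) l) +
    Matrix.single (1, 0) 0 ((-1 : K) ^ k * qbinom q (k + l - 1) k) +
    Matrix.single (1, 1) 1 (qbinom q (k + l) k)

/-- The matrix of the `R`-matrix on `C_q^{1|1} ⊗ C_q^{1|1}` in the basis `(v, w)`
(index `0 = v`, `1 = w`): `R(v⊗v) = q v⊗v`, `R(v⊗w) = (q-q⁻¹) v⊗w + w⊗v`,
`R(w⊗v) = v⊗w`, `R(w⊗w) = -q⁻¹ w⊗w`. -/
def Rmat {K : Type*} [Field K] (q : K) : Matrix (Fin 2 × Fin 2) (Fin 2 × Fin 2) K :=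
  Matrix.single (0, 0) (0, 0) q + Matrix.single (0, 1) (0, 1) (q - q⁻¹) +
    Matrix.single (1, 0) (0, 1) 1 + Matrix.single (0, 1) (1, 0) 1 +
    Matrix.single (1, 1) (1, 1) (-q⁻¹)

section Aux

variable {K : Type*} [Field K]

lemma qfact_eq_zero_mono (q : K) {m n : ℕ} (h : m ≤ n) (h0 : qfact q m = 0) :
    qfact q n = 0 := by
  induction n with
  | zero => rw [show (0:ℕ) = m by omega]; exact h0
  | succ n ih =>
    rcases Nat.lt_or_ge m (n+1) with hl | hg
    · have := ih (by omega)
      simp [qfact, this]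
    · have : m = n + 1 := by omega
      exact this ▸ h0

lemma qfact_ne_zero_of_le (q : K) {m n : ℕ} (h : m ≤ n) (h0 : qfact q n ≠ 0) :
    qfact q m ≠ 0 := fun hz => h0 (qfact_eq_zero_mono q h hz)

lemma qbinom_add_left (q : K) (a b : ℕ) :
    qbinom q (a + b) a = qfact q (a + b) / (qfact q a * qfact q b) := by
  rw [qbinom, if_pos (Nat.le_add_right a b), Nat.add_sub_cancel_left]

lemma qbinom_add_right (q : K) (a b : ℕ) :
    qbinom q (a + b) b = qfact q (a + b) / (qfact q a * qfact q b) := by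
  rw [qbinom, if_pos (Nat.le_add_left b a), Nat.add_sub_cancel, mul_comm]

lemma qbinom_of_qfact_zero (q : K) {n : ℕ} (k : ℕ) (h : qfact q n = 0) :
    qbinom q n k = 0 := by
  rw [qbinom]; split <;> simp [h]

/-- trinomial identity, form 1 -/
lemma tri1 (q : K) (i j k : ℕ) :
    qbinom q (i + j) i * qbinom q (i + j + k) (i + j) =
      qbinom q (j + k) j * qbinom q (i + (j + k)) i := by
  by_cases h : qfact q (i + j + k) = 0
  · rw [qbinom_of_qfact_zero q _ h, mul_zero,
      qbinom_of_qfact_zero q _ (show qfact q (i+(j+k)) = 0 by rwa [← add_assoc]), mul_zero]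
  · have hij : qfact q (i + j) ≠ 0 := qfact_ne_zero_of_le q (by omega) h
    have hjk : qfact q (j + k) ≠ 0 := qfact_ne_zero_of_le q (by omega) h
    have hi : qfact q i ≠ 0 := qfact_ne_zero_of_le q (by omega) h
    have hj : qfact q j ≠ 0 := qfact_ne_zero_of_le q (by omega) h
    have hk : qfact q k ≠ 0 := qfact_ne_zero_of_le q (by omega) h
    rw [qbinom_add_left q i j, qbinom_add_left q (i+j) k, qbinom_add_left q j k,
      qbinom_add_left q i (j+k), ← add_assoc]
    field_simp

/-- trinomial identity, form 2 (used with `a = i - 1`) -/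
lemma tri2 (q : K) (a j k : ℕ) :
    qbinom q (a + j) j * qbinom q (a + j + k) k =
      qbinom q (j + k) j * qbinom q (a + (j + k)) (j + k) := by
  by_cases h : qfact q (a + j + k) = 0
  · rw [qbinom_of_qfact_zero q _ h, mul_zero,
      qbinom_of_qfact_zero q _ (show qfact q (a+(j+k)) = 0 by rwa [← add_assoc]), mul_zero]
  · have haj : qfact q (a + j) ≠ 0 := qfact_ne_zero_of_le q (by omega) h
    have hjk : qfact q (j + k) ≠ 0 := qfact_ne_zero_of_le q (by omega) h
    have ha : qfact q a ≠ 0 := qfact_ne_zero_of_le q (by omega) h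
    have hj : qfact q j ≠ 0 := qfact_ne_zero_of_le q (by omega) h
    have hk : qfact q k ≠ 0 := qfact_ne_zero_of_le q (by omega) h
    rw [qbinom_add_right q a j, qbinom_add_right q (a+j) k, qbinom_add_left q j k,
      qbinom_add_right q a (j+k), ← add_assoc]
    field_simp

/-- trinomial identity, form 3 (used with `b = j - 1`) -/
lemma tri3 (q : K) (i b k : ℕ) :
    qbinom q (i + b) i * qbinom q (i + b + k) k =
      qbinom q (b + k) k * qbinom q (i + (b + k)) i := by
  by_cases h : qfact q (i + b + k) = 0
  · rw [qbinom_of_qfact_zero q _ h, mul_zero,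
      qbinom_of_qfact_zero q _ (show qfact q (i+(b+k)) = 0 by rwa [← add_assoc]), mul_zero]
  · have hib : qfact q (i + b) ≠ 0 := qfact_ne_zero_of_le q (by omega) h
    have hbk : qfact q (b + k) ≠ 0 := qfact_ne_zero_of_le q (by omega) h
    have hi : qfact q i ≠ 0 := qfact_ne_zero_of_le q (by omega) h
    have hb : qfact q b ≠ 0 := qfact_ne_zero_of_le q (by omega) h
    have hk : qfact q k ≠ 0 := qfact_ne_zero_of_le q (by omega) h
    rw [qbinom_add_left q i b, qbinom_add_right q (i+b) k, qbinom_add_right q b k,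
      qbinom_add_left q i (b+k), ← add_assoc]
    field_simp

lemma M'apply (q : K) (k l : ℕ) (a b c : Fin 2) :
    M'mat q k l (a, b) c =
      if a = 0 ∧ b = 1 ∧ c = 0 then q ^ (-(l : ℤ)) * qbinom q (k + l - 1) l
      else if a = 1 ∧ b = 0 ∧ c = 0 then (-1 : K) ^ k * qbinom q (k + l - 1) k
      else if a = 1 ∧ b = 1 ∧ c = 1 then qbinom q (k + l) k else 0 := by
  fin_cases a <;> fin_cases b <;> fin_cases c <;>
    simp [M'mat, Matrix.single, Matrix.add_apply, Prod.ext_iff]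

end Aux

/-- Coassociativity of the comultiplication maps:
`(M'_{i,j} ⊗ id) ∘ M'_{i+j,k} = (id ⊗ M'_{j,k}) ∘ M'_{i,j+k}` as maps
`W_{i+j+k} → W_i ⊗ W_j ⊗ W_k`. -/
theorem M'_coassoc {K : Type*} [Field K] (q : K) (hq : q ≠ 0)
    (hq' : q - q⁻¹ ≠ 0) (i j k : ℕ) (hi : 1 ≤ i) (hj : 1 ≤ j) (hk : 1 ≤ k) :
    (M'mat q i j ⊗ₖ (1 : Matrix (Fin 2) (Fin 2) K)) * M'mat q (i + j) k =
      ((((1 : Matrix (Fin 2) (Fin 2) K) ⊗ₖ M'mat q j k) * M'mat q i (j + k)).submatrix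
        (Equiv.prodAssoc (Fin 2) (Fin 2) (Fin 2)) id) := by
  obtain ⟨i, rfl⟩ : ∃ i', i = i' + 1 := ⟨i - 1, by omega⟩
  obtain ⟨j, rfl⟩ : ∃ j', j = j' + 1 := ⟨j - 1, by omega⟩
  obtain ⟨k, rfl⟩ : ∃ k', k = k' + 1 := ⟨k - 1, by omega⟩
  ext ⟨⟨a,b⟩,c⟩ d
  fin_cases a <;> fin_cases b <;> fin_cases c <;> fin_cases d <;>
    simp [-Prod.mk_zero_zero, -Prod.mk_one_one, Matrix.mul_apply, Matrix.kroneckerMap_apply,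
      Matrix.submatrix_apply, M'apply, Matrix.one_apply, Fintype.sum_prod_type, Fin.sum_univ_two]
  · -- (0,1,1) entry
    rw [show i + 1 + j = i + (j + 1) from by omega,
      show i + 1 + (j + 1) + k = i + (j + 1) + (k + 1) from by omega,
      show ((-1 : ℤ) + -(j:ℤ)) = -(((j+1 : ℕ)) : ℤ) from by push_cast; ring,
      show ((-1 : ℤ) + -(k:ℤ)) = -(((k+1 : ℕ)) : ℤ) from by push_cast; ring,
      show (-(((k+1 : ℕ)) : ℤ) + -(((j+1 : ℕ)) : ℤ)) = -(((j+1+(k+1) : ℕ)) : ℤ) from by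
        push_cast; ring,
      _root_.zpow_neg, _root_.zpow_neg, _root_.zpow_neg, zpow_natCast, zpow_natCast,
      zpow_natCast, pow_add, mul_inv]
    linear_combination ((q ^ (j+1))⁻¹ * (q ^ (k+1))⁻¹) * tri2 q i (j+1) (k+1)
  · -- (1,0,1) entry
    rw [show i + 1 + (j + 1) + k = i + 1 + j + (k + 1) from by omega,
      show j + 1 + k = j + (k + 1) from by omega,
      show i + (j + 1 + (k + 1)) = i + 1 + (j + (k + 1)) from by omega,
      show ((-1 : ℤ) + -(k:ℤ)) = -(((k+1 : ℕ)) : ℤ) from by push_cast; ring,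
      _root_.zpow_neg, zpow_natCast]
    linear_combination ((-1 : K) ^ (i+1) * (q ^ (k+1))⁻¹) * tri3 q (i+1) j (k+1)
  · -- (1,1,0) entry
    rw [show i + (j + 1 + (k + 1)) = i + 1 + (j + 1 + k) from by omega]
    linear_combination ((-1 : K) ^ (i + 1 + (j + 1))) * tri1 q (i+1) (j+1) k
  · -- (1,1,1) entry
    exact tri1 q (i+1) (j+1) (k+1)
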